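/- Let S be a string in which the character σ occurs exactly ℓ ≥ 2 times, and let Y be an Algorithm-1 output for S and σ. Then Y is nonempty and the first character of Y is exactly σ. -/

import Mathlib

open List

variable {α : Type*}

/-- The substring of `S` from 1-indexed position `a` to position `b`, inclusive
(empty when `a > b`). -/
def substr (S : List α) (a b : ℕ) : List α := (S.drop (a - 1)).take (b + 1 - a)

/-- `X` is a square subsequence of `S`. -/
def IsSquareSubseq (S X : List α) : Prop := (∃ Y, X = Y ++ Y) ∧ X <+ S

/-- `X` is a maximal square subsequence of `S`: it is a square subsequence of `S` and
is not a proper subsequence of any other square subsequence of `S`. -/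
def IsMaxSquareSubseq (S X : List α) : Prop :=
  IsSquareSubseq S X ∧ ∀ X', IsSquareSubseq S X' → X <+ X' → X' = X

/-- The square subsequence `Y ++ Y` is right-extendable in `S`. -/
def RightExtendable (S Y : List α) : Prop := ∃ y : α, Y ++ [y] ++ Y ++ [y] <+ S

/-- The square subsequence `Y ++ Y` is left-extendable in `S`. -/
def LeftExtendable (S Y : List α) : Prop := ∃ y : α, [y] ++ Y ++ [y] ++ Y <+ S

/-- The square subsequence `Y ++ Y` is inner-extendable in `S`. -/
def InnerExtendable (S Y : List α) : Prop :=
  ∃ (y : α) (Y₁ Y₂ : List α), Y = Y₁ ++ Y₂ ∧ Y₁ ≠ [] ∧ Y₂ ≠ [] ∧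
    Y₁ ++ [y] ++ Y₂ ++ Y₁ ++ [y] ++ Y₂ <+ S

/-- `X` is a `k`-repeating subsequence of `S`: the `k`-fold concatenation of `X`
is a subsequence of `S`. -/
def IsKRep (k : ℕ) (S X : List α) : Prop := (List.replicate k X).flatten <+ S

/-- `X` is a maximal `k`-repeating subsequence of `S`: the only `k`-repeating
subsequence of `S` having `X` as a subsequence is `X` itself. -/
def IsMaxKRep (k : ℕ) (S X : List α) : Prop :=
  IsKRep k S X ∧ ∀ Y, IsKRep k S Y → X <+ Y → Y = X

/-- A `σ`-split point for `A` and `B` in `S`: a strictly increasing `k`-tuple of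
1-indexed positions of `S` carrying `σ`, such that around each position `p i` one
can place `A` immediately to its left and `B` immediately to its right within a
window `[a i, b i]`, with consecutive windows disjoint (`b i < a (i+1)`). -/
def IsSplitPoint (S : List α) (σ : α) (A B : List α) (k : ℕ) (p : Fin k → ℕ) : Prop :=
  StrictMono p ∧
  (∀ i, 1 ≤ p i ∧ p i ≤ S.length ∧ substr S (p i) (p i) = [σ]) ∧
  ∃ a b : Fin k → ℕ,
    (∀ i, 1 ≤ a i ∧ a i ≤ p i ∧ p i ≤ b i ∧ b i ≤ S.length ∧
      A <+ substr S (a i) (p i - 1) ∧ B <+ substr S (p i + 1) (b i)) ∧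
    ∀ i j : Fin k, (i : ℕ) + 1 = (j : ℕ) → b i < a j

/-- A `σ`-start for `σ^r` in `S`: a strictly increasing `k`-tuple of 1-indexed
positions of `S` carrying `σ`, such that (with `p (k+1) = |S| + 1`) the string
`σ^r` is a subsequence of `S[p j .. p (j+1) − 1]` for every `j`. -/
def IsSigmaStart (S : List α) (σ : α) (r k : ℕ) (p : Fin k → ℕ) : Prop :=
  StrictMono p ∧
  (∀ i, 1 ≤ p i ∧ p i ≤ S.length ∧ substr S (p i) (p i) = [σ]) ∧
  ∀ i : Fin k, List.replicate r σ <+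
    substr S (p i) ((if h : (i : ℕ) + 1 < k then p ⟨(i : ℕ) + 1, h⟩ else S.length + 1) - 1)

/-- `W` is a maximal common subsequence of `T₁` and `T₂` containing `X`. -/
def IsMCSContaining (T₁ T₂ X W : List α) : Prop :=
  X <+ W ∧ W <+ T₁ ∧ W <+ T₂ ∧ ∀ W', W <+ W' → W' <+ T₁ → W' <+ T₂ → W' = W

/-- `p` is the 1-indexed position of the `t`-th occurrence (1-indexed `t`) of `σ` in `S`:
`S[p] = σ` and exactly `t - 1` occurrences of `σ` lie strictly before position `p`. -/
def NthOccPos [DecidableEq α] (S : List α) (σ : α) (t p : ℕ) : Prop :=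
  1 ≤ p ∧ p ≤ S.length ∧ substr S p p = [σ] ∧ (substr S 1 (p - 1)).count σ = t - 1

/-- `j` is the leftmost anchor of `Y` with position `i` in `S`: the smallest index `j`
such that `Y` is a subsequence of `S[i..j]`. -/
def LeftmostAnchor (S Y : List α) (i j : ℕ) : Prop :=
  Y <+ substr S i j ∧ ∀ j', Y <+ substr S i j' → j ≤ j'

/-- `Y` is an Algorithm-1 output for `S` and `σ` (Algorithm 1 of the paper), where
`ℓ = count σ S` and `e = ⌊ℓ/2⌋`. -/
def Alg1Output [DecidableEq α] (S : List α) (σ : α) (Y : List α) : Prop :=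
  ∃ (i1 ie1 : ℕ) (Y₀ : List α),
    NthOccPos S σ 1 i1 ∧
    NthOccPos S σ (S.count σ / 2 + 1) ie1 ∧
    IsMCSContaining (substr S i1 (ie1 - 1)) (substr S ie1 S.length)
      (List.replicate (S.count σ / 2) σ) Y₀ ∧
    ((Y = Y₀ ∧ (Odd (S.count σ) → ∀ ie2, NthOccPos S σ (S.count σ / 2 + 2) ie2 →
        ¬ Y₀ <+ substr S ie2 S.length)) ∨
     (Odd (S.count σ) ∧ ∃ ie2, NthOccPos S σ (S.count σ / 2 + 2) ie2 ∧
        Y₀ <+ substr S ie2 S.length ∧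
        IsMCSContaining (substr S i1 (ie2 - 1)) (substr S ie2 S.length) Y₀ Y))

/-- `Z` is an Algorithm-2 output for `S` and `σ` built from the Algorithm-1 output `Y`
(Algorithm 2 of the paper). -/
def Alg2Output [DecidableEq α] (S : List α) (σ : α) (Y Z : List α) : Prop :=
  ∃ (i1 i2 j1 : ℕ) (Z₀ : List α),
    NthOccPos S σ 1 i1 ∧ NthOccPos S σ 2 i2 ∧
    LeftmostAnchor S Y i1 j1 ∧
    IsMCSContaining (substr S 1 j1) (substr S (j1 + 1) S.length) Y Z₀ ∧
    ((Z = Z₀ ∧ (Odd (S.count σ) → ∀ j2, LeftmostAnchor S Y i2 j2 →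
        ¬ Z₀ <+ substr S (j2 + 1) S.length)) ∨
     (Odd (S.count σ) ∧ ∃ j2, LeftmostAnchor S Y i2 j2 ∧
        Z₀ <+ substr S (j2 + 1) S.length ∧
        IsMCSContaining (substr S 1 j2) (substr S (j2 + 1) S.length) Z₀ Z))

/-- If `σ` occurs exactly `ℓ ≥ 2` times in `S` and `Y` is an Algorithm-1
output for `S` and `σ`, then `Y` is nonempty and its first character is `σ`. -/
lemma substr_head_of_pos {α : Type*} {S : List α} {σ : α} {p b : ℕ}
    (h : substr S p p = [σ]) (hne : substr S p b ≠ []) :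
    ∃ t, substr S p b = σ :: t := by
  have h1 : (S.drop (p - 1)).take 1 = [σ] := by
    have : p + 1 - p = 1 := by omega
    simpa [substr, this] using h
  cases hd : S.drop (p - 1) with
  | nil => simp [hd] at h1
  | cons a t =>
    rw [hd] at h1
    simp at h1
    subst h1
    unfold substr at hne ⊢
    rw [hd] at hne ⊢
    cases hk : b + 1 - p with
    | zero => simp at hne; exact absurd hk hne
    | succ k => exact ⟨t.take k, rfl⟩

lemma mcs_head {α : Type*} {T₁ T₂ W : List α} {σ : α}
    (h₁ : ∃ t, T₁ = σ :: t) (h₂ : ∃ t, T₂ = σ :: t)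
    (hW : W ≠ []) (hs1 : W <+ T₁) (hs2 : W <+ T₂)
    (hmax : ∀ W', W <+ W' → W' <+ T₁ → W' <+ T₂ → W' = W) :
    W.head? = some σ := by
  obtain ⟨t₁, rfl⟩ := h₁
  obtain ⟨t₂, rfl⟩ := h₂
  cases W with
  | nil => exact absurd rfl hW
  | cons w ws =>
    by_cases hw : w = σ
    · simp [hw]
    · exfalso
      have hs1' : w :: ws <+ t₁ := by
        cases hs1 with
        | cons _ h => exact h
        | cons_cons _ h => exact absurd rfl hw
      have hs2' : w :: ws <+ t₂ := by
        cases hs2 with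
        | cons _ h => exact h
        | cons_cons _ h => exact absurd rfl hw
      have := hmax (σ :: w :: ws) ((w :: ws).sublist_cons_self σ)
        (hs1'.cons₂ σ) (hs2'.cons₂ σ)
      have := congrArg List.length this
      simp at this

theorem alg1_output_head {α : Type*} [DecidableEq α] (S : List α) (σ : α)
    (hℓ : 2 ≤ S.count σ) (Y : List α) (hY : Alg1Output S σ Y) :
    Y ≠ [] ∧ Y.head? = some σ := by
  obtain ⟨i1, ie1, Y₀, hi1, hie1, hY₀, hcase⟩ := hY
  have he : 1 ≤ S.count σ / 2 := by omega
  obtain ⟨hrep, hT1, hT2, hmax⟩ := hY₀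
  -- Y₀ is nonempty
  have hY₀ne : Y₀ ≠ [] := by
    intro h
    rw [h] at hrep
    have := (List.sublist_nil.mp hrep)
    rw [List.replicate_eq_nil_iff] at this
    omega
  -- the two substrings start with σ
  have hσ1 : substr S i1 i1 = [σ] := hi1.2.2.1
  have hσe1 : substr S ie1 ie1 = [σ] := hie1.2.2.1
  have hT1ne : substr S i1 (ie1 - 1) ≠ [] := by
    intro h; rw [h] at hT1; exact hY₀ne (List.sublist_nil.mp hT1)
  have hT2ne : substr S ie1 S.length ≠ [] := by
    intro h; rw [h] at hT2; exact hY₀ne (List.sublist_nil.mp hT2)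
  have hY₀head : Y₀.head? = some σ :=
    mcs_head (substr_head_of_pos hσ1 hT1ne) (substr_head_of_pos hσe1 hT2ne)
      hY₀ne hT1 hT2 hmax
  rcases hcase with ⟨rfl, _⟩ | ⟨hodd, ie2, hie2, hYsub, hYrep, hU1, hU2, hmax2⟩
  · exact ⟨hY₀ne, hY₀head⟩
  · have hYne : Y ≠ [] := by
      intro h; rw [h] at hYrep; exact hY₀ne (List.sublist_nil.mp hYrep)
    have hσe2 : substr S ie2 ie2 = [σ] := hie2.2.2.1
    have hU1ne : substr S i1 (ie2 - 1) ≠ [] := by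
      intro h; rw [h] at hU1; exact hYne (List.sublist_nil.mp hU1)
    have hU2ne : substr S ie2 S.length ≠ [] := by
      intro h; rw [h] at hU2; exact hYne (List.sublist_nil.mp hU2)
    exact ⟨hYne, mcs_head (substr_head_of_pos hσ1 hU1ne)
      (substr_head_of_pos hσe2 hU2ne) hYne hU1 hU2 hmax2⟩
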